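/- If m ≥ 3, then for every slot j ∈ {1,…,m}, the per-slot partial quality set function S ↦ −p^S(j)·log₂(p^S(j)) (with the convention 0·log₂ 0 = 0) is non-decreasing and submodular: for all finite S ⊆ T ⊆ {1,…,m} its value at S is at most its value at T, and for all finite X, Y ⊆ {1,…,m} its values satisfy f(X ∩ Y) + f(X ∪ Y) ≤ f(X) + f(Y). -/

import Mathlib

/-- Temporal distance between slots `j` and `e`. -/
def tdist (j e : ℕ) : ℕ := ((j : ℤ) - (e : ℤ)).natAbs

/-- Padded `k`-NN distance sum `I_k^S(j)`. -/
def Ik (m k : ℕ) (S : Finset ℕ) (j : ℕ) : ℕ :=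
  if k ≤ S.card then
    (((S.val.map (fun e => tdist j e)).sort (· ≤ ·)).take k).sum
  else
    (S.val.map (fun e => tdist j e)).sum + (k - S.card) * m

/-- Interpolation error ratio `ρ^S(j)`. -/
noncomputable def rho (m k : ℕ) (S : Finset ℕ) (j : ℕ) : ℝ :=
  if j ∈ S then 0 else (Ik m k S j : ℝ) / ((k : ℝ) * (m : ℝ))

/-- Subtask finishing probability `p^S(j)`. -/
noncomputable def prob (m k : ℕ) (S : Finset ℕ) (j : ℕ) : ℝ :=
  (1 / (m : ℝ)) * (1 - rho m k S j)

/-- Task quality `q(S)` (note `Real.logb 2 0 = 0`, so the convention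
`0 · log₂ 0 = 0` holds definitionally). -/
noncomputable def quality (m k : ℕ) (S : Finset ℕ) : ℝ :=
  ∑ j ∈ Finset.Icc 1 m, -(prob m k S j * Real.logb 2 (prob m k S j))

/-! ### Auxiliary combinatorial lemmas -/

lemma aux_sum_indicator (m a : ℕ) :
    ∑ t ∈ Finset.range m, (if a ≤ t then 1 else 0) = m - a := by
  rw [Finset.sum_boole]
  have : (Finset.range m).filter (fun t => a ≤ t) = Finset.Ico a m := by
    ext t
    simp only [Finset.mem_filter, Finset.mem_range, Finset.mem_Ico]
    omega
  rw [this, Nat.card_Ico, Nat.cast_id]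

/-- Counting identity: for a multiset of numbers `≤ m`, the sum of counts of
elements `≤ t` over `t < m` plus the total sum equals `card * m`. -/
lemma aux_countP_sum (m : ℕ) (s : Multiset ℕ) (hs : ∀ x ∈ s, x ≤ m) :
    ∑ t ∈ Finset.range m, Multiset.countP (fun x => x ≤ t) s + s.sum
      = Multiset.card s * m := by
  induction s using Multiset.induction with
  | empty => simp
  | cons a s ih =>
    have ha : a ≤ m := hs a (Multiset.mem_cons_self a s)
    have ih' := ih fun x hx => hs x (Multiset.mem_cons_of_mem hx)
    simp only [Multiset.countP_cons, Multiset.sum_cons, Multiset.card_cons,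
      Finset.sum_add_distrib, decide_eq_true_eq]
    rw [aux_sum_indicator]
    rw [Nat.add_mul, Nat.one_mul]
    omega

/-- For a sorted list, the count of elements `≤ t` in the first `k` elements is
`min k` of the total count. -/
lemma aux_countP_take (t : ℕ) (l : List ℕ) (hl : l.Pairwise (· ≤ ·)) :
    ∀ k, (l.take k).countP (fun x => decide (x ≤ t))
      = min k (l.countP (fun x => decide (x ≤ t))) := by
  induction l with
  | nil => intro k; simp
  | cons a l ih =>
    intro k
    obtain ⟨ha, hl'⟩ := List.pairwise_cons.mp hl
    cases k with
    | zero => simp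
    | succ k =>
      rw [List.take_succ_cons, List.countP_cons, List.countP_cons, ih hl' k]
      by_cases hat : a ≤ t
      · have hd : (decide (a ≤ t)) = true := by simpa using hat
        rw [hd]
        have h1 : (if (true = true) then 1 else 0) = 1 := rfl
        rw [h1]
        omega
      · have hd : (decide (a ≤ t)) = false := by simpa using hat
        have h0 : l.countP (fun x => decide (x ≤ t)) = 0 := by
          rw [List.countP_eq_zero]
          intro x hx
          simp only [decide_eq_true_eq]
          exact fun hxt => hat (le_trans (ha x hx) hxt)
        rw [hd, h0]
        simp

/-- The key identity: `Ik` plus the sum of truncated counts equals `k * m`. -/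
lemma Ik_add (m k : ℕ) (S : Finset ℕ) (j : ℕ) (hS : ∀ e ∈ S, tdist j e ≤ m) :
    Ik m k S j + ∑ t ∈ Finset.range m,
      min k (Multiset.countP (fun x => x ≤ t) (S.val.map (fun e => tdist j e)))
      = k * m := by
  set s : Multiset ℕ := S.val.map (fun e => tdist j e) with hs_def
  have hs : ∀ x ∈ s, x ≤ m := by
    intro x hx
    obtain ⟨e, he, rfl⟩ := Multiset.mem_map.mp hx
    exact hS e he
  have hcard : Multiset.card s = S.card := by simp [hs_def]
  rw [Ik]
  by_cases hkc : k ≤ S.card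
  · rw [if_pos hkc]
    set l : List ℕ := s.sort (· ≤ ·) with hl_def
    have hsl : (↑l : Multiset ℕ) = s := Multiset.sort_eq _ _
    have hsort : l.Pairwise (· ≤ ·) := Multiset.pairwise_sort _ _
    have hlen : l.length = Multiset.card s := by rw [← Multiset.coe_card, hsl]
    have h2 : ∀ t ∈ Finset.range m, min k (Multiset.countP (fun x => x ≤ t) s)
        = Multiset.countP (fun x => x ≤ t) (↑(l.take k) : Multiset ℕ) := by
      intro t _
      rw [← hsl, Multiset.coe_countP, Multiset.coe_countP, ← aux_countP_take t l hsort k]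
    rw [Finset.sum_congr rfl h2]
    have htake : ∀ x ∈ (↑(l.take k) : Multiset ℕ), x ≤ m := by
      intro x hx
      have hx' : x ∈ l := (List.take_sublist k l).mem (by exact_mod_cast hx)
      exact hs x (by rw [← hsl]; exact_mod_cast hx')
    have hmain := aux_countP_sum m (↑(l.take k)) htake
    have hcard2 : Multiset.card (↑(l.take k) : Multiset ℕ) = k := by
      rw [Multiset.coe_card, List.length_take, hlen, hcard]
      omega
    rw [hcard2] at hmain
    have hsum : (↑(l.take k) : Multiset ℕ).sum = (l.take k).sum := rfl
    rw [hsum] at hmain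
    rw [Nat.add_comm]
    exact hmain
  · rw [if_neg hkc]
    have h2 : ∀ t ∈ Finset.range m, min k (Multiset.countP (fun x => x ≤ t) s)
        = Multiset.countP (fun x => x ≤ t) s := by
      intro t _
      apply min_eq_right
      have := Multiset.countP_le_card (fun x => x ≤ t) s
      omega
    rw [Finset.sum_congr rfl h2]
    have h3 := aux_countP_sum m s hs
    rw [hcard] at h3
    have h4 : (k - S.card) * m + S.card * m = k * m := by
      rw [← Nat.add_mul]
      congr 1
      omega
    linarith [h3, h4]

lemma Ik_le (m k : ℕ) (S : Finset ℕ) (j : ℕ) (hS : ∀ e ∈ S, tdist j e ≤ m) :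
    Ik m k S j ≤ k * m :=
  Nat.le.intro (Ik_add m k S j hS)

lemma Ik_mono (m k : ℕ) {S T : Finset ℕ} (j : ℕ) (hST : S ⊆ T)
    (hT : ∀ e ∈ T, tdist j e ≤ m) : Ik m k T j ≤ Ik m k S j := by
  have h1 := Ik_add m k S j (fun e he => hT e (hST he))
  have h2 := Ik_add m k T j hT
  have h3 : ∑ t ∈ Finset.range m,
        min k (Multiset.countP (fun x => x ≤ t) (S.val.map (fun e => tdist j e)))
      ≤ ∑ t ∈ Finset.range m,
        min k (Multiset.countP (fun x => x ≤ t) (T.val.map (fun e => tdist j e))) := by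
    apply Finset.sum_le_sum
    intro t _
    have hle : S.val.map (fun e => tdist j e) ≤ T.val.map (fun e => tdist j e) :=
      Multiset.map_le_map (Finset.val_le_iff.mpr hST)
    have := Multiset.countP_le_of_le (fun x => x ≤ t) hle
    omega
  linarith [h1, h2, h3]

lemma Ik_supermod (m k : ℕ) {X Y : Finset ℕ} (j : ℕ)
    (hX : ∀ e ∈ X, tdist j e ≤ m) (hY : ∀ e ∈ Y, tdist j e ≤ m) :
    Ik m k X j + Ik m k Y j ≤ Ik m k (X ∩ Y) j + Ik m k (X ∪ Y) j := by
  have hXY : ∀ e ∈ X ∪ Y, tdist j e ≤ m := by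
    intro e he
    rcases Finset.mem_union.mp he with h | h
    · exact hX e h
    · exact hY e h
  have h1 := Ik_add m k X j hX
  have h2 := Ik_add m k Y j hY
  have h3 := Ik_add m k (X ∩ Y) j (fun e he => hX e (Finset.mem_of_mem_inter_left he))
  have h4 := Ik_add m k (X ∪ Y) j hXY
  have hsum : ∑ t ∈ Finset.range m,
        min k (Multiset.countP (fun x => x ≤ t) ((X ∩ Y).val.map (fun e => tdist j e)))
      + ∑ t ∈ Finset.range m,
        min k (Multiset.countP (fun x => x ≤ t) ((X ∪ Y).val.map (fun e => tdist j e)))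
      ≤ ∑ t ∈ Finset.range m,
        min k (Multiset.countP (fun x => x ≤ t) (X.val.map (fun e => tdist j e)))
      + ∑ t ∈ Finset.range m,
        min k (Multiset.countP (fun x => x ≤ t) (Y.val.map (fun e => tdist j e))) := by
    rw [← Finset.sum_add_distrib, ← Finset.sum_add_distrib]
    apply Finset.sum_le_sum
    intro t _
    have hmod : Multiset.countP (fun x => x ≤ t) ((X ∩ Y).val.map (fun e => tdist j e))
        + Multiset.countP (fun x => x ≤ t) ((X ∪ Y).val.map (fun e => tdist j e))
        = Multiset.countP (fun x => x ≤ t) (X.val.map (fun e => tdist j e))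
        + Multiset.countP (fun x => x ≤ t) (Y.val.map (fun e => tdist j e)) := by
      rw [← Multiset.countP_add, ← Multiset.countP_add, ← Multiset.map_add, ← Multiset.map_add]
      congr 2
      rw [Finset.inter_val, Finset.union_val, add_comm]
      exact Multiset.union_add_inter _ _
    have hmX : Multiset.countP (fun x => x ≤ t) ((X ∩ Y).val.map (fun e => tdist j e))
        ≤ Multiset.countP (fun x => x ≤ t) (X.val.map (fun e => tdist j e)) :=
      Multiset.countP_le_of_le _ (Multiset.map_le_map (Finset.val_le_iff.mpr Finset.inter_subset_left))
    have hmY : Multiset.countP (fun x => x ≤ t) ((X ∩ Y).val.map (fun e => tdist j e))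
        ≤ Multiset.countP (fun x => x ≤ t) (Y.val.map (fun e => tdist j e)) :=
      Multiset.countP_le_of_le _ (Multiset.map_le_map (Finset.val_le_iff.mpr Finset.inter_subset_right))
    omega
  linarith [h1, h2, h3, h4, hsum]

/-! ### Bounds on `rho` and `prob` -/

lemma tdist_le {m j e : ℕ} (hj : j ∈ Finset.Icc 1 m) (he : e ∈ Finset.Icc 1 m) :
    tdist j e ≤ m := by
  simp only [Finset.mem_Icc] at hj he
  unfold tdist
  omega

lemma rho_nonneg (m k : ℕ) (S : Finset ℕ) (j : ℕ) : 0 ≤ rho m k S j := by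
  unfold rho
  split
  · exact le_refl 0
  · positivity

lemma rho_le_one (m k : ℕ) (S : Finset ℕ) (j : ℕ) (hm : 1 ≤ m) (hk : 1 ≤ k)
    (hS : S ⊆ Finset.Icc 1 m) (hj : j ∈ Finset.Icc 1 m) : rho m k S j ≤ 1 := by
  unfold rho
  split
  · norm_num
  · have hpos : (0 : ℝ) < (k : ℝ) * (m : ℝ) := by
      have hk' : (0 : ℝ) < (k : ℝ) := by exact_mod_cast hk
      have hm' : (0 : ℝ) < (m : ℝ) := by exact_mod_cast hm
      exact mul_pos hk' hm'
    rw [div_le_one hpos]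
    have h := Ik_le m k S j (fun e he => tdist_le hj (hS he))
    calc (Ik m k S j : ℝ) ≤ ((k * m : ℕ) : ℝ) := by exact_mod_cast h
      _ = (k : ℝ) * (m : ℝ) := by push_cast; ring

lemma prob_nonneg (m k : ℕ) (S : Finset ℕ) (j : ℕ) (hm : 1 ≤ m) (hk : 1 ≤ k)
    (hS : S ⊆ Finset.Icc 1 m) (hj : j ∈ Finset.Icc 1 m) : 0 ≤ prob m k S j := by
  unfold prob
  have h1 := rho_le_one m k S j hm hk hS hj
  have hm' : (0 : ℝ) < (m : ℝ) := by exact_mod_cast hm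
  have : (0:ℝ) ≤ 1 / (m:ℝ) := by positivity
  nlinarith

lemma prob_le (m k : ℕ) (S : Finset ℕ) (j : ℕ) (hm : 1 ≤ m) :
    prob m k S j ≤ 1 / (m : ℝ) := by
  unfold prob
  have h0 := rho_nonneg m k S j
  have hm' : (0 : ℝ) < (m : ℝ) := by exact_mod_cast hm
  have : (0:ℝ) ≤ 1 / (m:ℝ) := by positivity
  nlinarith

lemma prob_mono (m k : ℕ) {S T : Finset ℕ} (j : ℕ) (hm : 1 ≤ m)
    (hT : T ⊆ Finset.Icc 1 m) (hST : S ⊆ T) (hj : j ∈ Finset.Icc 1 m) :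
    prob m k S j ≤ prob m k T j := by
  unfold prob
  have hrho : rho m k T j ≤ rho m k S j := by
    by_cases hT' : j ∈ T
    · have h0 : rho m k T j = 0 := by rw [rho, if_pos hT']
      rw [h0]
      exact rho_nonneg m k S j
    · unfold rho
      rw [if_neg hT', if_neg (fun hS' => hT' (hST hS'))]
      have hle : (Ik m k T j : ℝ) ≤ (Ik m k S j : ℝ) := by
        exact_mod_cast Ik_mono m k j hST (fun e he => tdist_le hj (hT he))
      gcongr
  have hm' : (0 : ℝ) < (m : ℝ) := by exact_mod_cast hm
  have : (0:ℝ) ≤ 1 / (m:ℝ) := by positivity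
  nlinarith

lemma prob_submod (m k : ℕ) {X Y : Finset ℕ} (j : ℕ) (hm : 1 ≤ m) (hk : 1 ≤ k)
    (hX : X ⊆ Finset.Icc 1 m) (hY : Y ⊆ Finset.Icc 1 m) (hj : j ∈ Finset.Icc 1 m) :
    prob m k (X ∩ Y) j + prob m k (X ∪ Y) j ≤ prob m k X j + prob m k Y j := by
  have hXb : ∀ e ∈ X, tdist j e ≤ m := fun e he => tdist_le hj (hX he)
  have hYb : ∀ e ∈ Y, tdist j e ≤ m := fun e he => tdist_le hj (hY he)
  have hpos : (0 : ℝ) < (k : ℝ) * (m : ℝ) := by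
    have hk' : (0 : ℝ) < (k : ℝ) := by exact_mod_cast hk
    have hm' : (0 : ℝ) < (m : ℝ) := by exact_mod_cast hm
    exact mul_pos hk' hm'
  have hrho : rho m k X j + rho m k Y j ≤ rho m k (X ∩ Y) j + rho m k (X ∪ Y) j := by
    by_cases hx : j ∈ X <;> by_cases hy : j ∈ Y
    · have h1 : j ∈ X ∩ Y := Finset.mem_inter.mpr ⟨hx, hy⟩
      have h2 : j ∈ X ∪ Y := Finset.mem_union_left _ hx
      simp [rho, hx, hy, h1, h2]
    · have h1 : j ∉ X ∩ Y := fun h => hy (Finset.mem_inter.mp h).2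
      have h2 : j ∈ X ∪ Y := Finset.mem_union_left _ hx
      rw [rho, rho, rho, rho, if_pos hx, if_neg hy, if_neg h1, if_pos h2]
      have hle := Ik_mono m k (S := X ∩ Y) (T := Y) j Finset.inter_subset_right hYb
      have : (Ik m k Y j : ℝ) ≤ (Ik m k (X ∩ Y) j : ℝ) := by exact_mod_cast hle
      have hdiv : (Ik m k Y j : ℝ) / ((k : ℝ) * (m : ℝ))
          ≤ (Ik m k (X ∩ Y) j : ℝ) / ((k : ℝ) * (m : ℝ)) := by gcongr
      linarith
    · have h1 : j ∉ X ∩ Y := fun h => hx (Finset.mem_inter.mp h).1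
      have h2 : j ∈ X ∪ Y := Finset.mem_union_right _ hy
      rw [rho, rho, rho, rho, if_neg hx, if_pos hy, if_neg h1, if_pos h2]
      have hle := Ik_mono m k (S := X ∩ Y) (T := X) j Finset.inter_subset_left hXb
      have : (Ik m k X j : ℝ) ≤ (Ik m k (X ∩ Y) j : ℝ) := by exact_mod_cast hle
      have hdiv : (Ik m k X j : ℝ) / ((k : ℝ) * (m : ℝ))
          ≤ (Ik m k (X ∩ Y) j : ℝ) / ((k : ℝ) * (m : ℝ)) := by gcongr
      linarith
    · have h1 : j ∉ X ∩ Y := fun h => hx (Finset.mem_inter.mp h).1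
      have h2 : j ∉ X ∪ Y := fun h => (Finset.mem_union.mp h).elim hx hy
      rw [rho, rho, rho, rho, if_neg hx, if_neg hy, if_neg h1, if_neg h2]
      rw [← add_div, ← add_div]
      apply (div_le_div_iff_of_pos_right hpos).mpr
      exact_mod_cast Ik_supermod m k j hXb hYb
  unfold prob
  have hm' : (0 : ℝ) < (m : ℝ) := by exact_mod_cast hm
  have : (0:ℝ) ≤ 1 / (m:ℝ) := by positivity
  nlinarith

/-! ### Real-analytic lemmas about `x ↦ -x log₂ x` -/

lemma negMulLog_mono_third {x y : ℝ} (hx : 0 ≤ x) (hxy : x ≤ y) (hy : y ≤ 1/3) :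
    Real.negMulLog x ≤ Real.negMulLog y := by
  rcases eq_or_lt_of_le hx with h0 | h0
  · rw [← h0, Real.negMulLog_zero]
    exact Real.negMulLog_nonneg (hx.trans hxy) (by linarith)
  · have hy0 : 0 < y := lt_of_lt_of_le h0 hxy
    have he3 : Real.exp 1 < 3 := lt_trans Real.exp_one_lt_d9 (by norm_num)
    have he : Real.exp 1 ≤ 1 / y := by
      rw [le_div_iff₀ hy0]
      nlinarith [Real.exp_pos 1]
    have hxy' : 1 / y ≤ 1 / x := one_div_le_one_div_of_le h0 hxy
    have he2 : Real.exp 1 ≤ 1 / x := he.trans hxy'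
    have := Real.log_div_self_antitoneOn (Set.mem_setOf.mpr he) (Set.mem_setOf.mpr he2) hxy'
    simp only at this
    rw [Real.log_div one_ne_zero (ne_of_gt h0), Real.log_div one_ne_zero (ne_of_gt hy0),
      Real.log_one, div_div_eq_mul_div, div_div_eq_mul_div] at this
    unfold Real.negMulLog
    have hx' : (0 - Real.log x) * x / 1 ≤ (0 - Real.log y) * y / 1 := this
    nlinarith

lemma negMulLog_slope_aux {a u v d : ℝ} (ha : 0 ≤ a) (hau : a < u) (huv : u ≤ v) (hvd : v < d) :
    (Real.negMulLog d - Real.negMulLog v) / (d - v)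
      ≤ (Real.negMulLog u - Real.negMulLog a) / (u - a) := by
  have hC := Real.concaveOn_negMulLog
  have hu : (0:ℝ) ≤ u := ha.trans hau.le
  have hd : (0:ℝ) ≤ d := (hu.trans huv).trans hvd.le
  rcases eq_or_lt_of_le huv with h | h
  · subst h
    exact hC.slope_anti_adjacent (Set.mem_Ici.mpr ha) (Set.mem_Ici.mpr hd) hau hvd
  · have h1 := hC.slope_anti_adjacent (Set.mem_Ici.mpr ha) (Set.mem_Ici.mpr (hu.trans h.le)) hau h
    have h2 := hC.slope_anti_adjacent (Set.mem_Ici.mpr hu) (Set.mem_Ici.mpr hd) h hvd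
    exact h2.trans h1

lemma negMulLog_four {a u v d : ℝ} (ha : 0 ≤ a) (hau : a ≤ u) (huv : u ≤ v) (hvd : v ≤ d)
    (hd : d ≤ 1/3) (hs : a + d ≤ u + v) :
    Real.negMulLog a + Real.negMulLog d ≤ Real.negMulLog u + Real.negMulLog v := by
  rcases eq_or_lt_of_le hau with h1 | h1
  · have hdv : d = v := le_antisymm (by linarith) hvd
    rw [← h1, hdv]
  · rcases eq_or_lt_of_le hvd with h2 | h2
    · rw [← h2]
      have := negMulLog_mono_third ha hau (by linarith)
      linarith
    · have hsl := negMulLog_slope_aux ha h1 huv h2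
      have hmono : Real.negMulLog a ≤ Real.negMulLog u :=
        negMulLog_mono_third ha hau (by linarith)
      have hnn : 0 ≤ (Real.negMulLog u - Real.negMulLog a) / (u - a) :=
        div_nonneg (by linarith) (by linarith)
      have key : Real.negMulLog d - Real.negMulLog v
          ≤ Real.negMulLog u - Real.negMulLog a := by
        have e1 : Real.negMulLog d - Real.negMulLog v
            = ((Real.negMulLog d - Real.negMulLog v) / (d - v)) * (d - v) :=
          (div_mul_cancel₀ _ (by linarith : d - v ≠ 0)).symm
        rw [e1]
        calc ((Real.negMulLog d - Real.negMulLog v) / (d - v)) * (d - v)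
            ≤ ((Real.negMulLog u - Real.negMulLog a) / (u - a)) * (d - v) := by
              apply mul_le_mul_of_nonneg_right hsl (by linarith)
          _ ≤ ((Real.negMulLog u - Real.negMulLog a) / (u - a)) * (u - a) := by
              apply mul_le_mul_of_nonneg_left (by linarith) hnn
          _ = Real.negMulLog u - Real.negMulLog a :=
              div_mul_cancel₀ _ (by linarith : u - a ≠ 0)
      linarith

lemma H_eq (x : ℝ) : -(x * Real.logb 2 x) = Real.negMulLog x / Real.log 2 := by
  rw [Real.logb, Real.negMulLog]
  ring

/-- If `m ≥ 3`, for every slot `j` the per-slot partial quality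
`S ↦ −p^S(j)·log₂(p^S(j))` is non-decreasing and submodular. -/
theorem partial_quality_nondecreasing_submodular (m k : ℕ) (hm : 3 ≤ m)
    (hk : 1 ≤ k) (j : ℕ) (hj : j ∈ Finset.Icc 1 m) :
    (∀ S T : Finset ℕ, T ⊆ Finset.Icc 1 m → S ⊆ T →
      -(prob m k S j * Real.logb 2 (prob m k S j)) ≤
        -(prob m k T j * Real.logb 2 (prob m k T j))) ∧
    (∀ X Y : Finset ℕ, X ⊆ Finset.Icc 1 m → Y ⊆ Finset.Icc 1 m →
      -(prob m k (X ∩ Y) j * Real.logb 2 (prob m k (X ∩ Y) j)) +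
        -(prob m k (X ∪ Y) j * Real.logb 2 (prob m k (X ∪ Y) j)) ≤
      -(prob m k X j * Real.logb 2 (prob m k X j)) +
        -(prob m k Y j * Real.logb 2 (prob m k Y j))) := by
  have hm1 : 1 ≤ m := by omega
  have hm' : (0 : ℝ) < (m : ℝ) := by exact_mod_cast hm1
  have hthird : 1 / (m : ℝ) ≤ 1 / 3 := by
    apply one_div_le_one_div_of_le (by norm_num)
    exact_mod_cast hm
  have hlog2 : (0 : ℝ) < Real.log 2 := Real.log_pos one_lt_two
  constructor
  · intro S T hT hST
    have hS : S ⊆ Finset.Icc 1 m := hST.trans hT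
    rw [H_eq, H_eq]
    have hmono := negMulLog_mono_third (prob_nonneg m k S j hm1 hk hS hj)
      (prob_mono m k j hm1 hT hST hj) ((prob_le m k T j hm1).trans hthird)
    exact (div_le_div_iff_of_pos_right hlog2).mpr hmono
  · intro X Y hX hY
    have hU : X ∪ Y ⊆ Finset.Icc 1 m := Finset.union_subset hX hY
    have hI : X ∩ Y ⊆ Finset.Icc 1 m := Finset.inter_subset_left.trans hX
    have ha0 := prob_nonneg m k (X ∩ Y) j hm1 hk hI hj
    have hau := prob_mono m k (S := X ∩ Y) (T := X) j hm1 hX Finset.inter_subset_left hj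
    have hav := prob_mono m k (S := X ∩ Y) (T := Y) j hm1 hY Finset.inter_subset_right hj
    have hud := prob_mono m k (S := X) (T := X ∪ Y) j hm1 hU Finset.subset_union_left hj
    have hvd := prob_mono m k (S := Y) (T := X ∪ Y) j hm1 hU Finset.subset_union_right hj
    have hd13 := (prob_le m k (X ∪ Y) j hm1).trans hthird
    have hs := prob_submod m k j hm1 hk hX hY hj
    rw [H_eq, H_eq, H_eq, H_eq, ← add_div, ← add_div]
    apply (div_le_div_iff_of_pos_right hlog2).mpr
    rcases le_total (prob m k X j) (prob m k Y j) with h | h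
    · exact negMulLog_four ha0 hau h hvd hd13 (by linarith)
    · have := negMulLog_four ha0 hav h hud hd13 (by linarith)
      linarith
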